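/- arXiv:math/0510594 — 2 statements merged into one kernel-verified Lean document; each statement's English description precedes it below -/
import Mathlib

section
/- Let X be a compact Hausdorff space and {X_i}_{i=1,…,n} a finite cover of X by closed subsets. Suppose for each i we are given a unital C(X_i)-algebra A_i, and for each pair i,j with X_i ∩ X_j nonempty a C(X_i ∩ X_j)-isomorphism α_ij : A_j|_{X_i ∩ X_j} → A_i|_{X_i ∩ X_j}, such that α_ii = id and, after restriction to X_i ∩ X_j ∩ X_k, α_ij ∘ α_jk = α_ik for all i,j,k. Then there exist a unital C(X)-algebra A and C(X_i)-isomorphisms π_i : A|_{X_i} → A_i such that for all i,j the composite π_i ∘ π_j^{-1}, restricted to X_i ∩ X_j, equals α_ij. -/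
set_option linter.unusedSectionVars false


universe u

/-- For a compact Hausdorff space `X` and a unital `C(X)`-algebra `(A, φ)` (a unital C*-algebra
`A` with a unital *-homomorphism `φ : C(X, ℂ) → A` taking values in the center of `A`; a unital
`C(W)`-algebra for a closed subset `W ⊆ X` is the same thing as a unital `C(X)`-algebra on which
every `f` vanishing on `W` acts as zero, via the surjective restriction map `C(X) → C(W)`),
the restriction ideal over a closed subset `W ⊆ X` is the closed two-sided ideal of `A`
generated by `{φ(f) * a : f ∈ C(X, ℂ), f vanishes on W, a ∈ A}`; since `φ` is central this
is the closed linear span of that set. -/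
noncomputable def restrictionIdeal {X : Type} [TopologicalSpace X] {A : Type u}
    [CStarAlgebra A] (φ : C(X, ℂ) →⋆ₐ[ℂ] A) (W : Set X) : Submodule ℂ A :=
  (Submodule.span ℂ
    {y : A | ∃ (f : C(X, ℂ)) (a : A), (∀ w ∈ W, f w = 0) ∧ y = φ f * a}).topologicalClosure

/-- `η : A → B` presents the unital `C(X)`-algebra `(B, φB)` as the restriction `A|_W` of the
unital `C(X)`-algebra `(A, φA)` over the closed set `W`: `η` is a surjective unital
*-homomorphism, it intertwines the `C(X)`-actions, and its kernel is exactly the restriction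
ideal of `A` over `W`.  (Such an `η` identifies `B` with the quotient C*-algebra
`A ⧸ restrictionIdeal φA W`, uniquely up to isomorphism.) -/
def IsRestrictionMap {X : Type} [TopologicalSpace X] {A : Type u} {B : Type u}
    [CStarAlgebra A] [CStarAlgebra B] (φA : C(X, ℂ) →⋆ₐ[ℂ] A) (φB : C(X, ℂ) →⋆ₐ[ℂ] B)
    (W : Set X) (η : A →⋆ₐ[ℂ] B) : Prop :=
  Function.Surjective η ∧ (∀ (f : C(X, ℂ)) (a : A), η (φA f * a) = φB f * η a) ∧
    (∀ a : A, η a = 0 ↔ a ∈ restrictionIdeal φA W)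

open scoped CStarAlgebra

section Generic

variable {X : Type} [TopologicalSpace X] [CompactSpace X] [T2Space X]

noncomputable def crealHom : C(X, ℝ) →+* C(X, ℂ) where
  toFun u := ⟨fun x => (u x : ℂ), Complex.continuous_ofReal.comp u.continuous⟩
  map_one' := by ext x; simp
  map_mul' u v := by ext x; simp
  map_zero' := by ext x; simp
  map_add' u v := by ext x; simp

noncomputable abbrev creal (u : C(X, ℝ)) : C(X, ℂ) := crealHom u

@[simp] lemma creal_apply (u : C(X, ℝ)) (x : X) : creal u x = (u x : ℂ) := rfl

lemma creal_sub (u v : C(X, ℝ)) : creal (u - v) = creal u - creal v := map_sub crealHom u v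
lemma creal_mul (u v : C(X, ℝ)) : creal (u * v) = creal u * creal v := map_mul crealHom u v
lemma creal_one : creal (1 : C(X, ℝ)) = 1 := map_one crealHom

lemma creal_norm_le (u : C(X, ℝ)) {c : ℝ} (hc : 0 ≤ c) (h : ∀ x, |u x| ≤ c) :
    ‖creal u‖ ≤ c := by
  rw [ContinuousMap.norm_le _ hc]
  intro x
  simpa using h x

variable {B : Type u} [CStarAlgebra B]

lemma phi_creal_norm_le (φ : C(X, ℂ) →⋆ₐ[ℂ] B) (u : C(X, ℝ)) {c : ℝ} (hc : 0 ≤ c)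
    (h : ∀ x, |u x| ≤ c) : ‖φ (creal u)‖ ≤ c :=
  le_trans (NonUnitalStarAlgHom.norm_apply_le φ _) (creal_norm_le u hc h)

lemma phi_creal_norm_le_one (φ : C(X, ℂ) →⋆ₐ[ℂ] B) (u : C(X, ℝ))
    (h0 : ∀ x, 0 ≤ u x) (h1 : ∀ x, u x ≤ 1) : ‖φ (creal u)‖ ≤ 1 :=
  phi_creal_norm_le φ u zero_le_one fun x => abs_le.mpr ⟨by linarith [h0 x], h1 x⟩

lemma phi_comm (φ : C(X, ℂ) →⋆ₐ[ℂ] B) (w w' : C(X, ℂ)) : φ w * φ w' = φ w' * φ w := by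
  rw [← map_mul, mul_comm, map_mul]

lemma sub_phi_eq (φ : C(X, ℂ) →⋆ₐ[ℂ] B) (w : C(X, ℝ)) (y : B) :
    y - φ (creal w) * y = φ (creal (1 - w)) * y := by
  rw [creal_sub, creal_one, map_sub, map_one, sub_mul, one_mul]

lemma gen_mem_restrictionIdeal (φ : C(X, ℂ) →⋆ₐ[ℂ] B) {W : Set X} {f : C(X, ℂ)}
    (hf : ∀ w ∈ W, f w = 0) (a : B) : φ f * a ∈ restrictionIdeal φ W :=
  Submodule.le_topologicalClosure _ (Submodule.subset_span ⟨f, a, hf, rfl⟩)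

lemma restrictionIdeal_anti (φ : C(X, ℂ) →⋆ₐ[ℂ] B) {W W' : Set X} (h : W ⊆ W') :
    restrictionIdeal φ W' ≤ restrictionIdeal φ W := by
  apply Submodule.topologicalClosure_mono
  apply Submodule.span_mono
  rintro y ⟨f, a, hf, rfl⟩
  exact ⟨f, a, fun w hw => hf w (h hw), rfl⟩

lemma isClosed_restrictionIdeal (φ : C(X, ℂ) →⋆ₐ[ℂ] B) (W : Set X) :
    IsClosed (restrictionIdeal φ W : Set B) :=
  Submodule.isClosed_topologicalClosure _

lemma mem_restrictionIdeal_of_approx (φ : C(X, ℂ) →⋆ₐ[ℂ] B) (W : Set X) (a : B)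
    (h : ∀ ε > (0:ℝ), ∃ f : C(X, ℂ), (∀ w ∈ W, f w = 0) ∧ ‖a - φ f * a‖ ≤ ε) :
    a ∈ restrictionIdeal φ W := by
  have : a ∈ closure ((Submodule.span ℂ
      {y : B | ∃ (f : C(X, ℂ)) (b : B), (∀ w ∈ W, f w = 0) ∧ y = φ f * b}) : Set B) := by
    rw [Metric.mem_closure_iff]
    intro ε hε
    obtain ⟨f, hfW, hfa⟩ := h (ε/2) (by positivity)
    refine ⟨φ f * a, Submodule.subset_span ⟨f, a, hfW, rfl⟩, ?_⟩
    rw [dist_eq_norm]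
    calc ‖a - φ f * a‖ ≤ ε/2 := hfa
      _ < ε := by linarith
  exact this

/-- key approximation characterization of membership in the restriction ideal -/
lemma mem_restrictionIdeal_iff (φ : C(X, ℂ) →⋆ₐ[ℂ] B) (W : Set X) (a : B) :
    a ∈ restrictionIdeal φ W ↔ ∀ ε > (0:ℝ), ∃ u : C(X, ℝ),
      (∀ x, 0 ≤ u x) ∧ (∀ x, u x ≤ 1) ∧ (∀ w ∈ W, u w = 0) ∧
      ‖a - φ (creal u) * a‖ ≤ ε := by
  constructor
  · intro ha
    let S : Submodule ℂ B :=
      { carrier := {b : B | ∀ ε > (0:ℝ), ∃ u : C(X, ℝ),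
          (∀ x, 0 ≤ u x) ∧ (∀ x, u x ≤ 1) ∧ (∀ w ∈ W, u w = 0) ∧
          ‖b - φ (creal u) * b‖ ≤ ε}
        zero_mem' := fun ε hε => ⟨0, by simp, by simp, by simp, by simp [hε.le]⟩
        add_mem' := by
          rintro b c hb hc ε hε
          obtain ⟨u, hu0, hu1, huW, hub⟩ := hb (ε/2) (by positivity)
          obtain ⟨v, hv0, hv1, hvW, hvc⟩ := hc (ε/2) (by positivity)
          refine ⟨u + v - u * v, ?_, ?_, ?_, ?_⟩
          · intro x
            have := hu0 x; have := hu1 x; have := hv0 x; have := hv1 x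
            simp only [ContinuousMap.sub_apply, ContinuousMap.add_apply,
              ContinuousMap.mul_apply]
            nlinarith
          · intro x
            have := hu0 x; have := hu1 x; have := hv0 x; have := hv1 x
            simp only [ContinuousMap.sub_apply, ContinuousMap.add_apply,
              ContinuousMap.mul_apply]
            nlinarith
          · intro w hw
            simp [huW w hw, hvW w hw]
          · have key : (b + c) - φ (creal (u + v - u * v)) * (b + c)
                = φ (creal (1 - v)) * (b - φ (creal u) * b)
                  + φ (creal (1 - u)) * (c - φ (creal v) * c) := by
              rw [sub_phi_eq φ u b, sub_phi_eq φ v c, sub_phi_eq φ _ (b + c)]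
              have h4 : creal ((1:C(X,ℝ)) - (u + v - u*v)) = creal (1-v) * creal (1-u) := by
                rw [← creal_mul]; congr 1; ring
              have t1 : (φ (creal (1-v)) * φ (creal (1-u))) * b
                  = φ (creal (1-v)) * (φ (creal (1-u)) * b) := mul_assoc _ _ _
              have t2 : (φ (creal (1-v)) * φ (creal (1-u))) * c
                  = φ (creal (1-u)) * (φ (creal (1-v)) * c) := by
                rw [phi_comm, mul_assoc]
              rw [h4, map_mul, mul_add, t1, t2]
            rw [key]
            have hn1 : ‖φ (creal ((1:C(X,ℝ)) - v))‖ ≤ 1 := by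
              refine phi_creal_norm_le φ _ zero_le_one fun x => abs_le.mpr ⟨?_, ?_⟩ <;>
                simp only [ContinuousMap.sub_apply, ContinuousMap.one_apply] <;>
                [linarith [hv1 x]; linarith [hv0 x]]
            have hn2 : ‖φ (creal ((1:C(X,ℝ)) - u))‖ ≤ 1 := by
              refine phi_creal_norm_le φ _ zero_le_one fun x => abs_le.mpr ⟨?_, ?_⟩ <;>
                simp only [ContinuousMap.sub_apply, ContinuousMap.one_apply] <;>
                [linarith [hu1 x]; linarith [hu0 x]]
            calc ‖_ + _‖ ≤ ‖φ (creal ((1:C(X,ℝ)) - v)) * (b - φ (creal u) * b)‖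
                  + ‖φ (creal ((1:C(X,ℝ)) - u)) * (c - φ (creal v) * c)‖ := norm_add_le _ _
              _ ≤ ‖φ (creal ((1:C(X,ℝ)) - v))‖ * ‖b - φ (creal u) * b‖
                  + ‖φ (creal ((1:C(X,ℝ)) - u))‖ * ‖c - φ (creal v) * c‖ :=
                    add_le_add (norm_mul_le _ _) (norm_mul_le _ _)
              _ ≤ 1 * (ε/2) + 1 * (ε/2) :=
                    add_le_add (mul_le_mul hn1 hub (norm_nonneg _) zero_le_one)
                      (mul_le_mul hn2 hvc (norm_nonneg _) zero_le_one)
              _ = ε := by ring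
        smul_mem' := by
          rintro c b hb ε hε
          rcases eq_or_ne c 0 with rfl | hc
          · exact ⟨0, by simp, by simp, by simp, by simp [hε.le]⟩
          · obtain ⟨u, hu0, hu1, huW, hub⟩ := hb (ε / (‖c‖ + 1))
              (div_pos hε (by positivity))
            refine ⟨u, hu0, hu1, huW, ?_⟩
            have heq : c • b - φ (creal u) * (c • b) = c • (b - φ (creal u) * b) := by
              rw [smul_sub, mul_smul_comm]
            rw [heq, norm_smul]
            have hpos : (0:ℝ) < ‖c‖ + 1 := by positivity
            calc ‖c‖ * ‖b - φ (creal u) * b‖ ≤ (‖c‖ + 1) * (ε / (‖c‖ + 1)) := by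
                  have h0 : ‖c‖ ≤ ‖c‖ + 1 := by linarith
                  exact mul_le_mul h0 hub (norm_nonneg _) hpos.le
              _ = ε := by field_simp }
    have hclosed : IsClosed (S : Set B) := by
      apply isClosed_of_closure_subset
      intro b hb ε hε
      rw [Metric.mem_closure_iff] at hb
      obtain ⟨c, hcS, hbc⟩ := hb (ε/3) (by positivity)
      obtain ⟨u, hu0, hu1, huW, huc⟩ := hcS (ε/3) (by positivity)
      refine ⟨u, hu0, hu1, huW, ?_⟩
      have hphin : ‖φ (creal u)‖ ≤ 1 := phi_creal_norm_le_one φ u hu0 hu1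
      calc ‖b - φ (creal u) * b‖
          = ‖(b - c) + (c - φ (creal u) * c) + φ (creal u) * (c - b)‖ := by
            congr 1; noncomm_ring
        _ ≤ ‖b - c‖ + ‖c - φ (creal u) * c‖ + ‖φ (creal u) * (c - b)‖ := norm_add₃_le
        _ ≤ ε/3 + ε/3 + 1 * (ε/3) := by
            have h1 : ‖b - c‖ ≤ ε/3 := by rw [← dist_eq_norm]; exact hbc.le
            have h3 : ‖φ (creal u) * (c - b)‖ ≤ 1 * (ε/3) := by
              refine le_trans (norm_mul_le _ _) (mul_le_mul hphin ?_ (norm_nonneg _) zero_le_one)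
              rw [← dist_eq_norm, dist_comm]; exact hbc.le
            exact add_le_add (add_le_add h1 huc) h3
        _ = ε := by ring
    refine Submodule.topologicalClosure_minimal _ ?_ hclosed ha
    rw [Submodule.span_le]
    rintro y ⟨g, b, hg, rfl⟩ ε hε
    set δ := ε / (‖b‖ + 1) with hδ
    have hδpos : 0 < δ := by positivity
    set u : C(X, ℝ) := ⟨fun x => min (‖g x‖ / δ) 1, Continuous.min (by fun_prop) continuous_const⟩
      with hu
    have hu0 : ∀ x, 0 ≤ u x := fun x => le_min (by positivity) zero_le_one
    have hu1 : ∀ x, u x ≤ 1 := fun x => min_le_right _ _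
    refine ⟨u, hu0, hu1, ?_, ?_⟩
    · intro w hw
      simp [hu, hg w hw, hδpos.le]
    · have key : φ g * b - φ (creal u) * (φ g * b) = φ (creal (1 - u) * g) * b := by
        rw [map_mul, creal_sub, creal_one, map_sub, map_one, sub_mul, one_mul, sub_mul,
          mul_assoc]
      rw [key]
      have hnorm : ‖creal (1 - u) * g‖ ≤ δ := by
        rw [ContinuousMap.norm_le _ hδpos.le]
        intro x
        simp only [ContinuousMap.mul_apply, creal_sub, creal_one, ContinuousMap.sub_apply,
          ContinuousMap.one_apply, creal_apply, norm_mul]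
        have hcast : (1:ℂ) - ((u x : ℝ) : ℂ) = (((1 - u x : ℝ)) : ℂ) := by push_cast; ring
        rw [hcast, Complex.norm_real]
        rcases le_total (‖g x‖) δ with h | h
        · have : ‖(1 - u x : ℝ)‖ ≤ 1 := by
            rw [Real.norm_eq_abs, abs_le]
            constructor <;> [linarith [hu1 x]; linarith [hu0 x]]
          calc ‖(1 - u x : ℝ)‖ * ‖g x‖ ≤ 1 * δ := mul_le_mul this h (norm_nonneg _) zero_le_one
            _ = δ := one_mul δ
        · have hux : u x = 1 := by
            simp only [hu, ContinuousMap.coe_mk]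
            exact min_eq_right ((le_div_iff₀ hδpos).mpr (by linarith))
          simp [hux, hδpos.le]
      calc ‖φ (creal (1 - u) * g) * b‖ ≤ ‖φ (creal (1 - u) * g)‖ * ‖b‖ := norm_mul_le _ _
        _ ≤ δ * ‖b‖ :=
            mul_le_mul (le_trans (NonUnitalStarAlgHom.norm_apply_le φ _) hnorm) le_rfl
              (norm_nonneg _) hδpos.le
        _ ≤ δ * (‖b‖ + 1) := by have := norm_nonneg b; nlinarith
        _ = ε * ((‖b‖+1) / (‖b‖+1)) := by rw [hδ]; ring
        _ ≤ ε := by rw [div_self (by positivity : (‖b‖:ℝ) + 1 ≠ 0), mul_one]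
  · intro h
    refine mem_restrictionIdeal_of_approx φ W a fun ε hε => ?_
    obtain ⟨u, hu0, hu1, huW, hub⟩ := h ε hε
    exact ⟨creal u, fun w hw => by simp [huW w hw], hub⟩

end Generic

section Generic2

variable {X : Type} [TopologicalSpace X] [CompactSpace X] [T2Space X]
variable {B : Type u} [CStarAlgebra B]

lemma mem_restrictionIdeal_union (φ : C(X, ℂ) →⋆ₐ[ℂ] B) {W1 W2 : Set X} {a : B}
    (h1 : a ∈ restrictionIdeal φ W1) (h2 : a ∈ restrictionIdeal φ W2) :
    a ∈ restrictionIdeal φ (W1 ∪ W2) := by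
  rw [mem_restrictionIdeal_iff] at h1 h2 ⊢
  intro ε hε
  obtain ⟨u, hu0, hu1, huW, hua⟩ := h1 (ε/2) (by positivity)
  obtain ⟨v, hv0, hv1, hvW, hva⟩ := h2 (ε/2) (by positivity)
  refine ⟨u * v, fun x => mul_nonneg (hu0 x) (hv0 x), fun x => ?_, ?_, ?_⟩
  · calc u x * v x ≤ 1 * 1 := mul_le_mul (hu1 x) (hv1 x) (hv0 x) zero_le_one
      _ = 1 := one_mul 1
  · rintro w (hw | hw)
    · simp [huW w hw]
    · simp [hvW w hw]
  · have key : a - φ (creal (u * v)) * a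
        = φ (creal v) * (a - φ (creal u) * a) + (a - φ (creal v) * a) := by
      rw [creal_mul, map_mul, mul_sub, phi_comm φ (creal u) (creal v), mul_assoc]
      abel
    rw [key]
    have hn : ‖φ (creal v)‖ ≤ 1 := phi_creal_norm_le_one φ v hv0 hv1
    calc ‖_ + _‖ ≤ ‖φ (creal v) * (a - φ (creal u) * a)‖ + ‖a - φ (creal v) * a‖ :=
          norm_add_le _ _
      _ ≤ 1 * (ε/2) + ε/2 := add_le_add
          (le_trans (norm_mul_le _ _) (mul_le_mul hn hua (norm_nonneg _) zero_le_one)) hva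
      _ = ε := by ring

lemma restrictionIdeal_eq_bot (φ : C(X, ℂ) →⋆ₐ[ℂ] B) {V : Set X}
    (hsupp : ∀ f : C(X, ℂ), (∀ w ∈ V, f w = 0) → φ f = 0) :
    restrictionIdeal φ V = ⊥ := by
  rw [restrictionIdeal]
  have h1 : Submodule.span ℂ {y : B | ∃ (f : C(X, ℂ)) (a : B),
      (∀ w ∈ V, f w = 0) ∧ y = φ f * a} = ⊥ := by
    rw [Submodule.span_eq_bot]
    rintro y ⟨f, a, hf, rfl⟩
    rw [hsupp f hf, zero_mul]
  rw [h1]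
  apply le_antisymm
  · apply Submodule.topologicalClosure_minimal _ le_rfl
    simp only [Submodule.bot_coe]
    exact isClosed_singleton
  · exact Submodule.le_topologicalClosure _

lemma mem_restrictionIdeal_empty (φ : C(X, ℂ) →⋆ₐ[ℂ] B) (a : B) :
    a ∈ restrictionIdeal φ (∅ : Set X) := by
  have h : a = φ 1 * a := by rw [map_one, one_mul]
  rw [h]
  exact gen_mem_restrictionIdeal φ (fun w hw => absurd hw (Set.notMem_empty w)) a

/-- one-step approximate splitting -/
lemma restrictionIdeal_split_step (φ : C(X, ℂ) →⋆ₐ[ℂ] B) {W1 W2 : Set X}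
    (hW1 : IsClosed W1) (hW2 : IsClosed W2) {b : B}
    (hb : b ∈ restrictionIdeal φ (W1 ∩ W2)) {ε : ℝ} (hε : 0 < ε) :
    ∃ c1 c2 : B, c1 ∈ restrictionIdeal φ W1 ∧ c1 ∈ restrictionIdeal φ (W1 ∩ W2) ∧
      c2 ∈ restrictionIdeal φ W2 ∧ c2 ∈ restrictionIdeal φ (W1 ∩ W2) ∧
      ‖c1‖ ≤ ‖b‖ ∧ ‖b - c1 - c2‖ ≤ ε := by
  rw [mem_restrictionIdeal_iff] at hb
  obtain ⟨u, hu0, hu1, huW, hub⟩ := hb (ε/2) (by positivity)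
  set δ := ε / (2 * (‖b‖ + 1)) with hδ
  have hδpos : 0 < δ := by positivity
  have hK1 : IsClosed (W1 ∩ {x | δ ≤ u x}) :=
    hW1.inter (isClosed_le continuous_const u.continuous)
  have hK2 : IsClosed (W2 ∩ {x | δ ≤ u x}) :=
    hW2.inter (isClosed_le continuous_const u.continuous)
  have hdisj : Disjoint (W1 ∩ {x | δ ≤ u x}) (W2 ∩ {x | δ ≤ u x}) := by
    rw [Set.disjoint_left]
    rintro x ⟨hx1, hxδ⟩ ⟨hx2, -⟩
    have h0 : u x = 0 := huW x ⟨hx1, hx2⟩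
    rw [Set.mem_setOf_eq, h0] at hxδ
    exact absurd hxδ (not_le.mpr hδpos)
  obtain ⟨h, hh1, hh2, hh01⟩ := exists_continuous_zero_one_of_isClosed hK1 hK2 hdisj
  set uδ : C(X, ℝ) := ⟨fun x => max (u x - δ) 0, by fun_prop⟩ with huδ
  have huδ0 : ∀ x, 0 ≤ uδ x := fun x => le_max_right _ _
  have huδle : ∀ x, uδ x ≤ u x := fun x => max_le (by linarith [hδpos]) (hu0 x)
  set f1 : C(X, ℝ) := uδ * h with hf1
  set f2 : C(X, ℝ) := uδ * (1 - h) with hf2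
  have hf1W : ∀ w ∈ W1, f1 w = 0 := by
    intro w hw
    rcases le_or_gt δ (u w) with hle | hlt
    · have h0 : h w = 0 := hh1 ⟨hw, hle⟩
      simp [hf1, h0]
    · have h0 : uδ w = 0 := by simp only [huδ, ContinuousMap.coe_mk]; simp; linarith
      simp [hf1, h0]
  have hf2W : ∀ w ∈ W2, f2 w = 0 := by
    intro w hw
    rcases le_or_gt δ (u w) with hle | hlt
    · have h0 : h w = 1 := hh2 ⟨hw, hle⟩
      simp [hf2, h0]
    · have h0 : uδ w = 0 := by simp only [huδ, ContinuousMap.coe_mk]; simp; linarith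
      simp [hf2, h0]
  have hf1W' : ∀ w ∈ W1 ∩ W2, f1 w = 0 := fun w hw => hf1W w hw.1
  have hf2W' : ∀ w ∈ W1 ∩ W2, f2 w = 0 := fun w hw => hf2W w hw.2
  refine ⟨φ (creal f1) * b, φ (creal f2) * b,
    gen_mem_restrictionIdeal φ (fun w hw => by simp [hf1W w hw]) b,
    gen_mem_restrictionIdeal φ (fun w hw => by simp [hf1W' w hw]) b,
    gen_mem_restrictionIdeal φ (fun w hw => by simp [hf2W w hw]) b,
    gen_mem_restrictionIdeal φ (fun w hw => by simp [hf2W' w hw]) b, ?_, ?_⟩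
  · have hn : ‖φ (creal f1)‖ ≤ 1 := by
      refine phi_creal_norm_le_one φ _ (fun x => ?_) (fun x => ?_)
      · exact mul_nonneg (huδ0 x) (hh01 x).1
      · calc uδ x * h x
            ≤ 1 * 1 := mul_le_mul (le_trans (huδle x) (hu1 x)) (hh01 x).2 (hh01 x).1 zero_le_one
          _ = 1 := one_mul 1
    calc ‖φ (creal f1) * b‖ ≤ ‖φ (creal f1)‖ * ‖b‖ := norm_mul_le _ _
      _ ≤ 1 * ‖b‖ := mul_le_mul hn le_rfl (norm_nonneg _) zero_le_one
      _ = ‖b‖ := one_mul _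
  · have hsum : f1 + f2 = uδ := by
      ext x
      simp only [hf1, hf2, ContinuousMap.add_apply, ContinuousMap.mul_apply,
        ContinuousMap.sub_apply, ContinuousMap.one_apply]
      ring
    have key : b - φ (creal f1) * b - φ (creal f2) * b
        = (b - φ (creal u) * b) + φ (creal (u - uδ)) * b := by
      have e1 : creal f1 + creal f2 = creal uδ := by
        rw [← map_add]; exact congrArg _ hsum
      calc b - φ (creal f1) * b - φ (creal f2) * b
          = b - (φ (creal f1) + φ (creal f2)) * b := by noncomm_ring
        _ = b - φ (creal uδ) * b := by rw [← map_add, e1]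
        _ = (b - φ (creal u) * b) + (φ (creal u) - φ (creal uδ)) * b := by noncomm_ring
        _ = (b - φ (creal u) * b) + φ (creal (u - uδ)) * b := by
            rw [creal_sub, map_sub]
    rw [key]
    have hd : ‖φ (creal (u - uδ))‖ ≤ δ := by
      refine phi_creal_norm_le φ _ hδpos.le fun x => ?_
      simp only [ContinuousMap.sub_apply, huδ, ContinuousMap.coe_mk]
      rw [abs_le]
      constructor
      · have h1 : (u x - δ) ⊔ 0 ≤ u x := max_le (by linarith) (hu0 x)
        linarith
      · rcases le_or_gt δ (u x) with hle | hlt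
        · rw [max_eq_left (by linarith)]; linarith
        · rw [max_eq_right (by linarith)]; linarith [hu0 x]
    calc ‖_ + _‖ ≤ ‖b - φ (creal u) * b‖ + ‖φ (creal (u - uδ)) * b‖ := norm_add_le _ _
      _ ≤ ε/2 + δ * ‖b‖ := add_le_add hub
          (le_trans (norm_mul_le _ _) (mul_le_mul hd le_rfl (norm_nonneg _) hδpos.le))
      _ ≤ ε/2 + δ * (‖b‖ + 1) := by
          have := norm_nonneg b
          have := hδpos.le
          nlinarith
      _ ≤ ε := by
          have hne : (‖b‖:ℝ) + 1 ≠ 0 := by positivity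
          have hmul : δ * (‖b‖ + 1) = ε / 2 := by
            rw [hδ]
            field_simp
          linarith

/-- exact splitting of the restriction ideal over an intersection -/
lemma restrictionIdeal_split (φ : C(X, ℂ) →⋆ₐ[ℂ] B) {W1 W2 : Set X}
    (hW1 : IsClosed W1) (hW2 : IsClosed W2) {a : B}
    (ha : a ∈ restrictionIdeal φ (W1 ∩ W2)) :
    ∃ c ∈ restrictionIdeal φ W1, a - c ∈ restrictionIdeal φ W2 := by
  classical
  have step : ∀ (b : {b : B // b ∈ restrictionIdeal φ (W1 ∩ W2)}) (n : ℕ),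
      ∃ c1 c2 : B, c1 ∈ restrictionIdeal φ W1 ∧ c1 ∈ restrictionIdeal φ (W1 ∩ W2) ∧
        c2 ∈ restrictionIdeal φ W2 ∧ c2 ∈ restrictionIdeal φ (W1 ∩ W2) ∧
        ‖c1‖ ≤ ‖b.1‖ ∧ ‖b.1 - c1 - c2‖ ≤ (1/2)^n := fun b n =>
    restrictionIdeal_split_step φ hW1 hW2 b.2 (pow_pos (by norm_num) n)
  choose p1 p2 hp1 hp1' hp2 hp2' hpn hpres using step
  let seq : ℕ → {b : B // b ∈ restrictionIdeal φ (W1 ∩ W2)} := fun n =>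
    Nat.rec ⟨a, ha⟩ (fun n b => ⟨b.1 - p1 b n - p2 b n,
      sub_mem (sub_mem b.2 (hp1' b n)) (hp2' b n)⟩) n
  let c1s : ℕ → B := fun n => p1 (seq n) n
  let c2s : ℕ → B := fun n => p2 (seq n) n
  have hseq0 : (seq 0).1 = a := rfl
  have hseqs : ∀ n, (seq (n+1)).1 = (seq n).1 - c1s n - c2s n := fun n => rfl
  have hresn : ∀ n, ‖(seq (n+1)).1‖ ≤ (1/2)^n := fun n => hpres (seq n) n
  have hc1b : ∀ n, ‖c1s n‖ ≤ (‖a‖ + 2) * (1/2)^n := by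
    intro n
    cases n with
    | zero =>
        have := hpn (seq 0) 0
        rw [hseq0] at this
        simpa using le_trans this (by linarith [norm_nonneg a])
    | succ m =>
        have h1 : ‖c1s (m+1)‖ ≤ ‖(seq (m+1)).1‖ := hpn (seq (m+1)) (m+1)
        have h2 : ‖(seq (m+1)).1‖ ≤ (1/2)^m := hresn m
        have h3 : ((1:ℝ)/2)^m = 2 * (1/2)^(m+1) := by ring
        have h4 : (2:ℝ) ≤ ‖a‖ + 2 := by linarith [norm_nonneg a]
        calc ‖c1s (m+1)‖ ≤ (1/2)^m := le_trans h1 h2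
          _ = 2 * (1/2)^(m+1) := h3
          _ ≤ (‖a‖ + 2) * (1/2)^(m+1) := by
              have : (0:ℝ) ≤ (1/2)^(m+1) := by positivity
              nlinarith
  have hsummable : Summable c1s := by
    apply Summable.of_norm_bounded (Summable.mul_left (‖a‖ + 2) summable_geometric_two)
    intro n
    simpa using hc1b n
  set c := ∑' n, c1s n with hc
  have hps : Filter.Tendsto (fun n => ∑ i ∈ Finset.range n, c1s i)
      Filter.atTop (nhds c) := hsummable.hasSum.tendsto_sum_nat
  have hcmem : c ∈ restrictionIdeal φ W1 := by
    refine (isClosed_restrictionIdeal φ W1).mem_of_tendsto hps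
      (Filter.Eventually.of_forall fun n => ?_)
    exact Submodule.sum_mem _ fun i _ => hp1 (seq i) i
  have htel : ∀ n, (seq n).1
      = a - ∑ i ∈ Finset.range n, c1s i - ∑ i ∈ Finset.range n, c2s i := by
    intro n
    induction n with
    | zero => simp [hseq0]
    | succ m ih =>
        rw [hseqs m, ih, Finset.sum_range_succ, Finset.sum_range_succ]
        abel
  have hseqtend : Filter.Tendsto (fun n => (seq n).1) Filter.atTop (nhds 0) := by
    rw [← Filter.tendsto_add_atTop_iff_nat 1]
    exact squeeze_zero_norm hresn
      (tendsto_pow_atTop_nhds_zero_of_lt_one (by norm_num) (by norm_num))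
  have hc2tend : Filter.Tendsto (fun n => ∑ i ∈ Finset.range n, c2s i)
      Filter.atTop (nhds (a - c - 0)) := by
    have heq : (fun n => ∑ i ∈ Finset.range n, c2s i)
        = fun n => a - (∑ i ∈ Finset.range n, c1s i) - (seq n).1 := by
      funext n
      rw [htel n]
      abel
    rw [heq]
    exact (Filter.Tendsto.sub (Filter.Tendsto.sub tendsto_const_nhds hps) hseqtend)
  refine ⟨c, hcmem, ?_⟩
  rw [show a - c = a - c - 0 by rw [sub_zero]]
  refine (isClosed_restrictionIdeal φ W2).mem_of_tendsto hc2tend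
    (Filter.Eventually.of_forall fun n => ?_)
  exact Submodule.sum_mem _ fun i _ => hp2 (seq i) i

end Generic2

section Glue

variable {X : Type} [TopologicalSpace X] [CompactSpace X] [T2Space X]
variable {n : ℕ} {A : Fin n → Type u} [∀ i, CStarAlgebra (A i)]
variable {R : Fin n → Fin n → Type u} [∀ i j, CStarAlgebra (R i j)]

/-- the algebra of compatible families -/
def glued (η : ∀ i j, A i →⋆ₐ[ℂ] R i j) (α : ∀ i j, R j i ≃⋆ₐ[ℂ] R i j) :
    StarSubalgebra ℂ (∀ i, A i) where
  carrier := {x | ∀ i j, η i j (x i) = α i j (η j i (x j))}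
  mul_mem' {x y} hx hy := by
    intro i j
    simp only [Pi.mul_apply, map_mul, hx i j, hy i j]
  add_mem' {x y} hx hy := by
    intro i j
    simp only [Pi.add_apply, map_add, hx i j, hy i j]
  algebraMap_mem' c := by
    intro i j
    simp only [Pi.algebraMap_apply, AlgHomClass.commutes]
  star_mem' {x} hx := by
    intro i j
    simp only [Pi.star_apply, map_star, hx i j]

lemma glued_isClosed (η : ∀ i j, A i →⋆ₐ[ℂ] R i j) (α : ∀ i j, R j i ≃⋆ₐ[ℂ] R i j) :
    IsClosed ((glued η α : StarSubalgebra ℂ (∀ i, A i)) : Set (∀ i, A i)) := by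
  have : ((glued η α : StarSubalgebra ℂ (∀ i, A i)) : Set (∀ i, A i))
      = ⋂ i, ⋂ j, {x : ∀ i, A i | η i j (x i) = α i j (η j i (x j))} := by
    ext x
    simp only [Set.mem_iInter, Set.mem_setOf_eq]
    rfl
  rw [this]
  refine isClosed_iInter fun i => isClosed_iInter fun j => ?_
  have hc1 : Continuous fun x : ∀ i, A i => η i j (x i) := by
    have := NonUnitalStarAlgHom.instContinuousLinearMapClassComplex
      (F := A i →⋆ₐ[ℂ] R i j) (A := A i) (B := R i j)
    exact (map_continuous (η i j)).comp (continuous_apply i)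
  have hc2 : Continuous fun x : ∀ i, A i => α i j (η j i (x j)) := by
    have h1 : Continuous fun x : ∀ i, A i => η j i (x j) := by
      have := NonUnitalStarAlgHom.instContinuousLinearMapClassComplex
        (F := A j →⋆ₐ[ℂ] R j i) (A := A j) (B := R j i)
      exact (map_continuous (η j i)).comp (continuous_apply j)
    have h2 : Continuous (α i j) := by
      have := NonUnitalStarAlgHom.instContinuousLinearMapClassComplex
        (F := R j i →⋆ₐ[ℂ] R i j) (A := R j i) (B := R i j)
      exact map_continuous ((α i j : R j i ≃⋆ₐ[ℂ] R i j) : R j i →⋆ₐ[ℂ] R i j)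
    exact h2.comp h1
  exact isClosed_eq hc1 hc2

end Glue

section Glue2

variable {X : Type} [TopologicalSpace X] [CompactSpace X] [T2Space X]
variable {n : ℕ} {A : Fin n → Type u} [∀ i, CStarAlgebra (A i)]
variable {R : Fin n → Fin n → Type u} [∀ i j, CStarAlgebra (R i j)]
variable (η : ∀ i j, A i →⋆ₐ[ℂ] R i j) (α : ∀ i j, R j i ≃⋆ₐ[ℂ] R i j)

example : True := by
  haveI : IsClosed ((glued η α : StarSubalgebra ℂ (∀ i, A i)) : Set (∀ i, A i)) :=
    glued_isClosed η α
  haveI : CStarAlgebra (glued η α) := inferInstance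
  have h : ∀ x : glued η α, ‖x‖ = ‖(x : ∀ i, A i)‖ := fun x => rfl
  trivial

/-- the evaluation maps -/
def gluedProj (k : Fin n) : (glued η α) →⋆ₐ[ℂ] A k where
  toFun x := (x : ∀ i, A i) k
  map_one' := rfl
  map_mul' x y := rfl
  map_zero' := rfl
  map_add' x y := rfl
  commutes' c := rfl
  map_star' x := rfl

/-- the structure map of the glued algebra -/
noncomputable def gluedPhi (φ : ∀ i, C(X, ℂ) →⋆ₐ[ℂ] A i) (ψ : ∀ i j, C(X, ℂ) →⋆ₐ[ℂ] R i j)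
    (hηφ : ∀ i j (f : C(X, ℂ)) (a : A i), η i j (φ i f * a) = ψ i j f * η i j a)
    (hα : ∀ i j (f : C(X, ℂ)) (r : R j i), α i j (ψ j i f * r) = ψ i j f * α i j r) :
    C(X, ℂ) →⋆ₐ[ℂ] glued η α where
  toFun f := ⟨fun i => φ i f, by
    intro i j
    have h1 : η i j (φ i f) = ψ i j f := by
      have := hηφ i j f 1
      simpa using this
    have h2 : η j i (φ j f) = ψ j i f := by
      have := hηφ j i f 1
      simpa using this
    have h3 : α i j (ψ j i f) = ψ i j f := by
      have h4 : α i j (ψ j i f * 1) = ψ i j f * α i j 1 := hα i j f 1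
      simpa using h4
    rw [h1, h2, h3]⟩
  map_one' := by ext i; exact map_one (φ i)
  map_mul' f g := by ext i; exact map_mul (φ i) f g
  map_zero' := by ext i; exact map_zero (φ i)
  map_add' f g := by ext i; exact map_add (φ i) f g
  commutes' c := by ext i; exact AlgHomClass.commutes (φ i) c
  map_star' f := by ext i; exact map_star (φ i) f

end Glue2


set_option maxHeartbeats 1000000 in
/-- **glueing of `C(X)`-algebras.**  Let `X` be a compact Hausdorff space and
`X₁, …, Xₙ` a finite closed cover of `X`.  Suppose for each `i` we are given a unital
`C(Xᵢ)`-algebra `(A i, φ i)` (encoded as a unital `C(X)`-algebra on which functions vanishing on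
`Xᵢ` act as zero), for each pair `i, j` a restriction `(R i j, ψ i j, η i j)` of `A i` over
`Xᵢ ∩ Xⱼ`, and `C(Xᵢ ∩ Xⱼ)`-isomorphisms `α i j : A j|_{Xᵢ∩Xⱼ} ≅ A i|_{Xᵢ∩Xⱼ}` with `α i i = id`
and satisfying the cocycle condition `α i j ∘ α j k = α i k` after restriction to
`Xᵢ ∩ Xⱼ ∩ Xₖ` (expressed on representatives).  Then there exist a unital `C(X)`-algebra
`(A', φ')` and `C(Xᵢ)`-isomorphisms `π i : A'|_{Xᵢ} → A i` (encoded as surjective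
`C(X)`-morphisms `p i : A' → A i` with kernel the restriction ideal over `Xᵢ`) such that for
all `i, j` the composite `π i ∘ (π j)⁻¹` restricted over `Xᵢ ∩ Xⱼ` equals `α i j`. -/
theorem stmt_5 (X : Type) [TopologicalSpace X] [CompactSpace X] [T2Space X]
    (n : ℕ) (Xi : Fin n → Set X)
    (hXiclosed : ∀ i, IsClosed (Xi i)) (hXicover : ⋃ i, Xi i = Set.univ)
    -- the unital `C(Xᵢ)`-algebras `A i`
    (A : Fin n → Type u) [∀ i, CStarAlgebra (A i)]
    (φ : ∀ i, C(X, ℂ) →⋆ₐ[ℂ] A i)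
    (hφcentral : ∀ i (f : C(X, ℂ)) (a : A i), φ i f * a = a * φ i f)
    (hφsupp : ∀ i (f : C(X, ℂ)), (∀ w ∈ Xi i, f w = 0) → φ i f = 0)
    -- the restrictions `R i j = A i|_{Xᵢ ∩ Xⱼ}`
    (R : Fin n → Fin n → Type u) [∀ i j, CStarAlgebra (R i j)]
    (ψ : ∀ i j, C(X, ℂ) →⋆ₐ[ℂ] R i j)
    (hψcentral : ∀ i j (f : C(X, ℂ)) (r : R i j), ψ i j f * r = r * ψ i j f)
    (η : ∀ i j, A i →⋆ₐ[ℂ] R i j)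
    (hη : ∀ i j, IsRestrictionMap (φ i) (ψ i j) (Xi i ∩ Xi j) (η i j))
    -- the `C(Xᵢ ∩ Xⱼ)`-isomorphisms `α i j : A j|_{Xᵢ∩Xⱼ} ≅ A i|_{Xᵢ∩Xⱼ}`
    (α : ∀ i j, R j i ≃⋆ₐ[ℂ] R i j)
    (hα : ∀ i j (f : C(X, ℂ)) (r : R j i), α i j (ψ j i f * r) = ψ i j f * α i j r)
    (hαid : ∀ i (r : R i i), α i i r = r)
    -- the cocycle identity `α i j ∘ α j k = α i k` over `Xᵢ ∩ Xⱼ ∩ Xₖ`, on representatives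
    (hcocycle : ∀ i j k (a : A k) (b : A j) (c d : A i),
      η j k b = α j k (η k j a) → η i j c = α i j (η j i b) → η i k d = α i k (η k i a) →
      c - d ∈ restrictionIdeal (φ i) (Xi i ∩ Xi j ∩ Xi k)) :
    ∃ (A' : Type u) (_ : CStarAlgebra A') (φ' : C(X, ℂ) →⋆ₐ[ℂ] A'),
      (∀ (f : C(X, ℂ)) (a : A'), φ' f * a = a * φ' f) ∧
      ∃ p : ∀ i, A' →⋆ₐ[ℂ] A i,
        (∀ i, IsRestrictionMap φ' (φ i) (Xi i) (p i)) ∧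
        (∀ i j (a : A'), η i j (p i a) = α i j (η j i (p j a))) := by
  classical
  haveI hGclosed : IsClosed ((glued η α : StarSubalgebra ℂ (∀ i, A i)) : Set (∀ i, A i)) :=
    glued_isClosed η α
  -- the interchange identities
  have hηφ : ∀ i j (f : C(X, ℂ)) (a : A i), η i j (φ i f * a) = ψ i j f * η i j a :=
    fun i j => (hη i j).2.1
  have hker : ∀ i j (a : A i), η i j a = 0 ↔ a ∈ restrictionIdeal (φ i) (Xi i ∩ Xi j) :=
    fun i j => (hη i j).2.2
  have hηsurj : ∀ i j, Function.Surjective (η i j) := fun i j => (hη i j).1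
  -- the glued algebra and its structure map
  set φ' : C(X, ℂ) →⋆ₐ[ℂ] glued η α := gluedPhi η α φ ψ hηφ hα with hφ'
  have hφ'app : ∀ (f : C(X, ℂ)) (i : Fin n), ((φ' f : glued η α) : ∀ i, A i) i = φ i f :=
    fun f i => rfl
  -- the inverse property of α
  have hαinv : ∀ i j (r : R i j), α i j (α j i r) = r := by
    intro i j r
    obtain ⟨a, rfl⟩ := hηsurj i j r
    obtain ⟨b, hb⟩ := hηsurj j i (α j i (η i j a))
    obtain ⟨cc, hcc⟩ := hηsurj i j (α i j (η j i b))
    have hd : η i i a = α i i (η i i a) := (hαid i _).symm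
    have hmem := hcocycle i j i a b cc a hb hcc hd
    have hseteq : Xi i ∩ Xi j ∩ Xi i = Xi i ∩ Xi j := by
      ext x
      simp only [Set.mem_inter_iff]
      tauto
    rw [hseteq] at hmem
    have h0 : η i j (cc - a) = 0 := (hker i j _).mpr hmem
    rw [map_sub, sub_eq_zero] at h0
    calc α i j (α j i (η i j a)) = α i j (η j i b) := by rw [hb]
      _ = η i j cc := hcc.symm
      _ = η i j a := h0
  -- the extension lemma
  have ext_lemma : ∀ (S : Finset (Fin n)) (x : ∀ i, A i),
      (∀ i ∈ S, ∀ j ∈ S, η i j (x i) = α i j (η j i (x j))) → ∀ m : Fin n,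
      ∃ b : A m, ∀ j ∈ S, η m j b = α m j (η j m (x j)) := by
    intro S
    induction S using Finset.induction_on with
    | empty => exact fun x hx m => ⟨0, fun j hj => absurd hj (Finset.notMem_empty j)⟩
    | @insert j0 S' hj0 IH =>
      intro x hx m
      obtain ⟨b', hb'⟩ := IH x (fun i hi j hj =>
        hx i (Finset.mem_insert_of_mem hi) j (Finset.mem_insert_of_mem hj)) m
      obtain ⟨b0, hb0⟩ := hηsurj m j0 (α m j0 (η j0 m (x j0)))
      have hd : ∀ j ∈ S', b0 - b' ∈ restrictionIdeal (φ m) (Xi m ∩ Xi j0 ∩ Xi j) := by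
        intro j hj
        exact hcocycle m j0 j (x j) (x j0) b0 b'
          (hx j0 (Finset.mem_insert_self j0 S') j (Finset.mem_insert_of_mem hj))
          hb0 (hb' j hj)
      have hdU : ∀ (T : Finset (Fin n)), (∀ j ∈ T, j ∈ S') →
          b0 - b' ∈ restrictionIdeal (φ m) (⋃ j ∈ T, (Xi m ∩ Xi j0 ∩ Xi j)) := by
        intro T
        induction T using Finset.induction_on with
        | empty =>
          intro _
          have h0 : (⋃ j ∈ (∅ : Finset (Fin n)), (Xi m ∩ Xi j0 ∩ Xi j)) = (∅ : Set X) := by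
            simp
          rw [h0]
          exact mem_restrictionIdeal_empty (φ m) _
        | @insert t T' ht IH2 =>
          intro hT
          have h1 := hd t (hT t (Finset.mem_insert_self t T'))
          have h2 := IH2 (fun j hj => hT j (Finset.mem_insert_of_mem hj))
          have h3 := mem_restrictionIdeal_union (φ m) h1 h2
          have h0 : (⋃ j ∈ insert t T', (Xi m ∩ Xi j0 ∩ Xi j))
              = (Xi m ∩ Xi j0 ∩ Xi t) ∪ ⋃ j ∈ T', (Xi m ∩ Xi j0 ∩ Xi j) := by
            simp [Set.biUnion_insert]
          rw [h0]
          exact h3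
      have hmain := hdU S' (fun j hj => hj)
      set W1 : Set X := ⋃ j ∈ S', (Xi m ∩ Xi j) with hW1
      set W2 : Set X := Xi m ∩ Xi j0 with hW2
      have hW1closed : IsClosed W1 :=
        Set.Finite.isClosed_biUnion (Finset.finite_toSet S')
          (fun j _ => (hXiclosed m).inter (hXiclosed j))
      have hW2closed : IsClosed W2 := (hXiclosed m).inter (hXiclosed j0)
      have hseteq : W1 ∩ W2 = ⋃ j ∈ S', (Xi m ∩ Xi j0 ∩ Xi j) := by
        ext x
        simp only [hW1, hW2, Set.mem_inter_iff, Set.mem_iUnion, Set.mem_inter_iff,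
          exists_prop]
        tauto
      rw [← hseteq] at hmain
      obtain ⟨c, hc1, hc2⟩ := restrictionIdeal_split (φ m) hW1closed hW2closed hmain
      refine ⟨b' + c, ?_⟩
      intro j hj
      rcases Finset.mem_insert.mp hj with rfl | hjS'
      · have he : η m j ((b0 - b') - c) = 0 := (hker m j _).mpr hc2
        have he2 : η m j (b' + c) = η m j b0 := by
          have he3 : b0 - (b' + c) = (b0 - b') - c := by abel
          have he4 : η m j (b0 - (b' + c)) = 0 := by rw [he3]; exact he
          rw [map_sub, sub_eq_zero] at he4
          exact he4.symm
        rw [he2, hb0]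
      · have hsubset : Xi m ∩ Xi j ⊆ W1 := by
          intro x hx
          rw [hW1]
          exact Set.mem_biUnion hjS' hx
        have hcj : η m j c = 0 :=
          (hker m j _).mpr (restrictionIdeal_anti (φ m) hsubset hc1)
        rw [map_add, hcj, add_zero]
        exact hb' j hjS'
  -- surjectivity of the projections
  have hsurj : ∀ k (a : A k), ∃ x : glued η α, ((x : glued η α) : ∀ i, A i) k = a := by
    intro k a
    have claim : ∀ S : Finset (Fin n), ∃ x : ∀ i, A i, x k = a ∧
        ∀ i ∈ insert k S, ∀ j ∈ insert k S, η i j (x i) = α i j (η j i (x j)) := by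
      intro S
      induction S using Finset.induction_on with
      | empty =>
        refine ⟨Function.update (fun i => 0) k a, Function.update_self k a _, ?_⟩
        intro i hi j hj
        simp only [Finset.mem_insert, Finset.notMem_empty, or_false] at hi hj
        subst hi; subst hj
        rw [Function.update_self]
        exact (hαid _ _).symm
      | @insert m S' hm IH =>
        obtain ⟨x, hxk, hxcomp⟩ := IH
        by_cases hmk : m ∈ insert k S'
        · have heq : insert k (insert m S') = insert k S' := by
            rcases Finset.mem_insert.mp hmk with rfl | h'
            · rw [Finset.insert_idem]
            · exact absurd h' hm
          rw [heq]
          exact ⟨x, hxk, hxcomp⟩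
        · obtain ⟨b, hb⟩ := ext_lemma (insert k S') x hxcomp m
          have hmne : ∀ l ∈ insert k S', l ≠ m := fun l hl h => hmk (h ▸ hl)
          refine ⟨Function.update x m b, ?_, ?_⟩
          · rw [Function.update_of_ne (hmne k (Finset.mem_insert_self k S')) b x]
            exact hxk
          · intro i hi j hj
            have hmem : ∀ l, l ∈ insert k (insert m S') ↔ l = m ∨ l ∈ insert k S' := by
              intro l
              simp only [Finset.mem_insert]
              tauto
            rcases (hmem i).mp hi with rfl | hiS <;> rcases (hmem j).mp hj with rfl | hjS
            · rw [Function.update_self]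
              exact (hαid _ _).symm
            · rw [Function.update_self, Function.update_of_ne (hmne j hjS) b x]
              exact hb j hjS
            · rw [Function.update_self, Function.update_of_ne (hmne i hiS) b x]
              rw [hb i hiS, hαinv]
            · rw [Function.update_of_ne (hmne i hiS) b x,
                Function.update_of_ne (hmne j hjS) b x]
              exact hxcomp i hiS j hjS
    obtain ⟨x, hxk, hcomp⟩ := claim Finset.univ
    exact ⟨⟨x, fun i j => hcomp i (by simp) j (by simp)⟩, hxk⟩
  -- forward kernel inclusion
  have hker_fwd : ∀ k (a : glued η α), a ∈ restrictionIdeal φ' (Xi k) →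
      ((a : glued η α) : ∀ i, A i) k = 0 := by
    intro k
    set K : Submodule ℂ (glued η α) :=
      { carrier := {a : glued η α | ((a : glued η α) : ∀ i, A i) k = 0}
        zero_mem' := rfl
        add_mem' := by
          intro a b ha hb
          show ((a : ∀ i, A i) + (b : ∀ i, A i)) k = 0
          rw [Pi.add_apply, ha, hb, add_zero]
        smul_mem' := by
          intro c a ha
          show (c • (a : ∀ i, A i)) k = 0
          rw [Pi.smul_apply, ha, smul_zero] } with hK
    have hKclosed : IsClosed (K : Set (glued η α)) := by
      have hcont : Continuous fun a : glued η α => ((a : glued η α) : ∀ i, A i) k :=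
        (continuous_apply k).comp continuous_subtype_val
      have : (K : Set (glued η α)) = (fun a : glued η α =>
          ((a : glued η α) : ∀ i, A i) k) ⁻¹' {0} := by
        ext a
        simp [hK, Set.mem_preimage]
      rw [this]
      exact IsClosed.preimage hcont isClosed_singleton
    intro a ha
    have : a ∈ K := by
      refine Submodule.topologicalClosure_minimal _ ?_ hKclosed ha
      rw [Submodule.span_le]
      rintro y ⟨f, b, hf, rfl⟩
      show ((φ' f : glued η α) : ∀ i, A i) k * ((b : glued η α) : ∀ i, A i) k = 0
      rw [hφ'app, hφsupp k f hf, zero_mul]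
    exact this
  -- backward kernel inclusion
  have hker_bwd : ∀ k (a : glued η α), ((a : glued η α) : ∀ i, A i) k = 0 →
      a ∈ restrictionIdeal φ' (Xi k) := by
    intro k x hxk
    have hxj : ∀ j, ((x : glued η α) : ∀ i, A i) j ∈ restrictionIdeal (φ j) (Xi k) := by
      intro j
      have h1 : η j k (((x : glued η α) : ∀ i, A i) j) = 0 := by
        rw [x.2 j k, hxk, map_zero, map_zero]
      have h2 := (hker j k _).mp h1
      obtain ⟨c, hc1, hc2⟩ := restrictionIdeal_split (φ j) (hXiclosed j) (hXiclosed k) h2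
      have hbot : restrictionIdeal (φ j) (Xi j) = ⊥ := restrictionIdeal_eq_bot (φ j) (hφsupp j)
      rw [hbot, Submodule.mem_bot] at hc1
      rw [hc1, sub_zero] at hc2
      exact hc2
    refine mem_restrictionIdeal_of_approx φ' (Xi k) x fun ε hε => ?_
    have hchoice : ∀ j : Fin n, ∃ u : C(X, ℝ), (∀ y, 0 ≤ u y) ∧ (∀ y, u y ≤ 1) ∧
        (∀ w ∈ Xi k, u w = 0) ∧
        ‖((x : glued η α) : ∀ i, A i) j - φ j (creal u) * ((x : glued η α) : ∀ i, A i) j‖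
          ≤ ε := by
      intro j
      exact (mem_restrictionIdeal_iff (φ j) (Xi k) _).mp (hxj j) ε hε
    choose us hu0 hu1 huW hub using hchoice
    set v : C(X, ℝ) := ∏ j : Fin n, (1 - us j) with hv
    have hv0 : ∀ y, 0 ≤ v y := by
      intro y
      rw [hv, ContinuousMap.prod_apply]
      exact Finset.prod_nonneg fun j _ => by
        simp only [ContinuousMap.sub_apply, ContinuousMap.one_apply]
        linarith [hu1 j y]
    have hv1 : ∀ y, v y ≤ 1 := by
      intro y
      rw [hv, ContinuousMap.prod_apply]
      refine Finset.prod_le_one (fun j _ => ?_) (fun j _ => ?_)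
      · simp only [ContinuousMap.sub_apply, ContinuousMap.one_apply]
        linarith [hu1 j y]
      · simp only [ContinuousMap.sub_apply, ContinuousMap.one_apply]
        linarith [hu0 j y]
    refine ⟨creal (1 - v), ?_, ?_⟩
    · intro w hw
      have : v w = 1 := by
        rw [hv, ContinuousMap.prod_apply]
        refine Finset.prod_eq_one fun j _ => ?_
        simp [huW j w hw]
      simp [this]
    · have hcomp : ∀ j, (((x - φ' (creal (1 - v)) * x : glued η α)) : ∀ i, A i) j
          = φ j (creal (∏ l ∈ Finset.univ.erase j, (1 - us l)))
            * (((x : glued η α) : ∀ i, A i) j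
              - φ j (creal (us j)) * ((x : glued η α) : ∀ i, A i) j) := by
        intro j
        have e0 : (((x - φ' (creal (1 - v)) * x : glued η α)) : ∀ i, A i) j
            = ((x : glued η α) : ∀ i, A i) j
              - φ j (creal (1 - v)) * ((x : glued η α) : ∀ i, A i) j := rfl
        rw [e0, sub_phi_eq (φ j) (1 - v) _]
        have e1 : (1 : C(X, ℝ)) - (1 - v) = v := by ring
        rw [e1]
        have e2 : v = (1 - us j) * ∏ l ∈ Finset.univ.erase j, (1 - us l) := by
          rw [hv, ← Finset.mul_prod_erase Finset.univ _ (Finset.mem_univ j)]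
        rw [e2, mul_comm ((1:C(X,ℝ)) - us j), creal_mul, map_mul, mul_assoc,
          ← sub_phi_eq (φ j) (us j)]
      have hnormle : ‖x - φ' (creal (1 - v)) * x‖ ≤ ε := by
        have hcoe : ‖x - φ' (creal (1 - v)) * x‖
            = ‖(((x - φ' (creal (1 - v)) * x : glued η α)) : ∀ i, A i)‖ := rfl
        rw [hcoe, pi_norm_le_iff_of_nonneg hε.le]
        intro j
        rw [hcomp j]
        have hrest : ‖φ j (creal (∏ l ∈ Finset.univ.erase j, (1 - us l)))‖ ≤ 1 := by
          refine phi_creal_norm_le_one (φ j) _ (fun y => ?_) (fun y => ?_)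
          · rw [ContinuousMap.prod_apply]
            exact Finset.prod_nonneg fun l _ => by
              simp only [ContinuousMap.sub_apply, ContinuousMap.one_apply]
              linarith [hu1 l y]
          · rw [ContinuousMap.prod_apply]
            refine Finset.prod_le_one (fun l _ => ?_) (fun l _ => ?_)
            · simp only [ContinuousMap.sub_apply, ContinuousMap.one_apply]
              linarith [hu1 l y]
            · simp only [ContinuousMap.sub_apply, ContinuousMap.one_apply]
              linarith [hu0 l y]
        calc ‖_ * _‖ ≤ ‖φ j (creal (∏ l ∈ Finset.univ.erase j, (1 - us l)))‖
              * ‖((x : glued η α) : ∀ i, A i) j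
                - φ j (creal (us j)) * ((x : glued η α) : ∀ i, A i) j‖ := norm_mul_le _ _
          _ ≤ 1 * ε := mul_le_mul hrest (hub j) (norm_nonneg _) zero_le_one
          _ = ε := one_mul ε
      exact hnormle
  -- assemble
  refine ⟨glued η α, inferInstance, φ', ?_, fun i => gluedProj η α i, ?_, ?_⟩
  · intro f a
    apply Subtype.ext
    funext i
    exact hφcentral i f (((a : glued η α) : ∀ i, A i) i)
  · intro i
    refine ⟨?_, ?_, ?_⟩
    · intro a
      obtain ⟨x, hx⟩ := hsurj i a
      exact ⟨x, hx⟩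
    · intro f a
      rfl
    · intro a
      constructor
      · exact hker_bwd i a
      · exact hker_fwd i a
  · intro i j a
    exact a.2 i j
end

section
/- Let A be a unital C*-algebra with 1 ≠ 0, let V ∈ A satisfy V*·V = 1, and set P := V·V*. Let α : A → A be a *-homomorphism such that α(P) = P, and suppose that V*·α(V) = z·1 for some complex number z. Then |z| = 1 and α(V) = z·V. -/
/-- Let `A` be a unital C*-algebra with `1 ≠ 0`, let `V ∈ A` be an isometry
(`V* V = 1`) and `P := V V*` the associated projection.  Let `α : A → A` be a *-homomorphism
with `α P = P`, and suppose `V* · α V = z • 1` for some complex number `z`.  Then `|z| = 1`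
and `α V = z • V`. -/
theorem stmt_11 (A : Type*) [CStarAlgebra A] (h1 : (1 : A) ≠ 0)
    (V : A) (hV : star V * V = 1) (P : A) (hP : P = V * star V)
    (α : A →⋆ₙₐ[ℂ] A) (hα : α P = P)
    (z : ℂ) (hz : star V * α V = z • (1 : A)) :
    ‖z‖ = 1 ∧ α V = z • V := by
  have hPV : P * V = V := by
    rw [hP, mul_assoc, hV, mul_one]
  have hαV : α V = z • V := by
    calc α V = α (P * V) := by rw [hPV]
    _ = α P * α V := by rw [map_mul]
    _ = P * α V := by rw [hα]
    _ = V * (star V * α V) := by rw [hP, mul_assoc]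
    _ = V * (z • 1) := by rw [hz]
    _ = z • V := by rw [mul_smul_comm, mul_one]
  refine ⟨?_, hαV⟩
  have hPne : P ≠ 0 := by
    intro h0
    apply h1
    have : star V * (P * V) = 0 := by rw [h0, zero_mul, mul_zero]
    rwa [hPV, hV] at this
  have key : α P = (z * star z) • P := by
    rw [hP, map_mul, map_star, hαV, star_smul, smul_mul_smul_comm, mul_smul]
  rw [hα] at key
  have : (z * star z - 1) • P = 0 := by
    rw [sub_smul, one_smul, ← key, sub_self]
  rcases smul_eq_zero.mp this with h | h
  · have hz1 : z * star z = 1 := by linear_combination h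
    have h2 : ((Complex.normSq z : ℝ) : ℂ) = 1 := by
      rw [← Complex.mul_conj, ← Complex.star_def]; exact hz1
    have h3 : Complex.normSq z = 1 := by exact_mod_cast h2
    have h4 : ‖z‖ ^ 2 = 1 := by
      rw [Complex.sq_norm, h3]
    nlinarith [norm_nonneg z]
  · exact absurd h hPne
end
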